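/- arXiv:0708.3423 — 2 statements merged into one kernel-verified Lean document; each statement's English description precedes it below -/
import Mathlib

section
/- Let 1 < p < 2, let (Ω, μ) be a probability space and write L_p = L_p(Ω, μ) and L_2 = L_2(Ω, μ) (complex scalars). Let (T(z)) be a holomorphic semigroup on L_p, i.e. z ↦ T(z) is an analytic map from an open sector S_α = {z ∈ ℂ : z ≠ 0, |arg z| < α} (for some 0 < α ≤ π/2) into the bounded operators B(L_p), satisfying T(z)T(w) = T(z+w) for all z, w ∈ S_α, and sup{‖T(z)‖ : z ∈ S_β, |z| ≤ R} < ∞ for every 0 < β < α and R > 0. Assume that for some s > 0 the operator T(s) is bounded from L_p to L_2, i.e. there is c₀ > 0 such that for every f ∈ L_p the function T(s)f belongs to L_2 and ‖T(s)f‖_2 ≤ c₀‖f‖_p. Then for every t > 0 there exist constants c > 0 and d ∈ ℝ such that for every ε > 0 there is an operator T' ∈ B(L_p) with ‖T(t) − T'‖_{B(L_p)} ≤ ε, such that T' maps L_p into L_2 and ‖T' : L_p → L_2‖ ≤ c·ε^d. In particular, for every t > 0, T(t) lies in the norm closure in B(L_p) of the set Γ₂ of operators on L_p that map L_p boundedly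 into L_2. -/
open MeasureTheory Complex ENNReal

set_option maxHeartbeats 1000000

namespace PisierAux

open Metric

variable {F : Type*} [NormedAddCommGroup F] [NormedSpace ℂ F]

lemma cauchy_coeff_norm_le (f : ℂ → F) (c : ℂ) {R C : ℝ} (hR : 0 < R)
    (hb : ∀ z ∈ sphere c R, ‖f z‖ ≤ C) (n : ℕ) :
    ‖cauchyPowerSeries f c R n‖ ≤ C / R ^ n := by
  refine (norm_cauchyPowerSeries_le f c R n).trans ?_
  have h1 : ∫ θ : ℝ in (0)..(2 * Real.pi), ‖f (circleMap c R θ)‖ ≤ 2 * Real.pi * C := by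
    have h2 : ∀ x ∈ Set.uIoc (0:ℝ) (2 * Real.pi), ‖(‖f (circleMap c R x)‖)‖ ≤ C := by
      intro x _
      rw [norm_norm]
      exact hb _ (circleMap_mem_sphere c hR.le x)
    have := intervalIntegral.norm_integral_le_of_norm_le_const h2
    rw [Real.norm_eq_abs] at this
    have h3 := le_trans (le_abs_self _) this
    calc ∫ θ : ℝ in (0)..(2 * Real.pi), ‖f (circleMap c R θ)‖ ≤ C * |2 * Real.pi - 0| := h3
      _ = 2 * Real.pi * C := by
          rw [sub_zero, abs_of_pos Real.two_pi_pos]; ring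
  have hRabs : |R| = R := abs_of_pos hR
  rw [hRabs]
  calc (2 * Real.pi)⁻¹ * (∫ θ : ℝ in (0)..(2 * Real.pi), ‖f (circleMap c R θ)‖) * R⁻¹ ^ n
      ≤ (2 * Real.pi)⁻¹ * (2 * Real.pi * C) * R⁻¹ ^ n := by
        have : (0:ℝ) < 2 * Real.pi := Real.two_pi_pos
        gcongr
    _ = C / R ^ n := by
        rw [inv_pow]
        field_simp

lemma mem_sector {θ : ℝ} (hθ : 0 < θ) (hθ2 : θ ≤ Real.pi / 2) {x0 : ℝ} (hx0 : 0 < x0)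
    {z : ℂ} (hz : ‖z - (x0 : ℂ)‖ < (Real.sin θ / (1 + Real.sin θ)) * x0) :
    z ≠ 0 ∧ |z.arg| < θ := by
  have hπ := Real.pi_pos
  set σ := Real.sin θ with hσdef
  have hσ0 : 0 < σ := Real.sin_pos_of_pos_of_lt_pi hθ (by linarith)
  have hσ1 : σ ≤ 1 := Real.sin_le_one θ
  set k := σ / (1 + σ) with hkdef
  have hk0 : 0 < k := by positivity
  have hk1 : k < 1 := by
    rw [hkdef, div_lt_one (by linarith)]; linarith
  have hσk : σ * (1 - k) = k := by
    rw [hkdef]; field_simp; ring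
  have habsre : |z.re - x0| ≤ ‖z - (x0 : ℂ)‖ := by
    have := Complex.abs_re_le_norm (z - (x0 : ℂ))
    simpa using this
  have hre : (1 - k) * x0 < z.re := by
    have h1 : -(k * x0) < z.re - x0 := by
      have := (abs_lt.1 (lt_of_le_of_lt habsre hz)).1
      linarith
    linarith
  have hrepos : 0 < z.re := lt_of_le_of_lt (by nlinarith) hre
  have him : |z.im| < k * x0 := by
    have := Complex.abs_im_le_norm (z - (x0 : ℂ))
    rw [Complex.sub_im, Complex.ofReal_im, sub_zero] at this
    exact lt_of_le_of_lt this hz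
  have hzne : z ≠ 0 := by
    intro h
    rw [h] at hrepos
    simp at hrepos
  refine ⟨hzne, ?_⟩
  rw [Complex.arg_of_re_nonneg hrepos.le]
  have habsz : (1 - k) * x0 < ‖z‖ :=
    lt_of_lt_of_le hre (Complex.re_le_norm z)
  have habszpos : 0 < ‖z‖ := lt_of_le_of_lt (by nlinarith) habsz
  have hq : |z.im / ‖z‖| < σ := by
    rw [abs_div, abs_of_pos habszpos, div_lt_iff₀ habszpos]
    calc |z.im| < k * x0 := him
      _ = σ * ((1 - k) * x0) := by rw [← mul_assoc, hσk]
      _ ≤ σ * ‖z‖ := by nlinarith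
  have hq1 := abs_lt.1 hq
  have habsq : |z.im / ‖z‖| ≤ 1 := by
    rw [abs_div, abs_of_pos habszpos, div_le_one habszpos]
    exact Complex.abs_im_le_norm z
  have hmem : z.im / ‖z‖ ∈ Set.Icc (-1 : ℝ) 1 := abs_le.1 habsq
  have hmemσ : σ ∈ Set.Icc (-1 : ℝ) 1 := ⟨by linarith, hσ1⟩
  have hmemnσ : -σ ∈ Set.Icc (-1 : ℝ) 1 := ⟨by linarith, by linarith⟩
  have hup : Real.arcsin (z.im / ‖z‖) < θ := by
    have := Real.strictMonoOn_arcsin hmem hmemσ hq1.2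
    rwa [hσdef, Real.arcsin_sin (by linarith) (by linarith)] at this
  have hdown : -θ < Real.arcsin (z.im / ‖z‖) := by
    have := Real.strictMonoOn_arcsin hmemnσ hmem hq1.1
    rwa [hσdef, ← Real.sin_neg, Real.arcsin_sin (by linarith) (by linarith)] at this
  exact abs_lt.2 ⟨hdown, hup⟩

end PisierAux

/-- Pisier's theorem (Theorem 1): a holomorphic semigroup on `L_p` of a probability space
(`1 < p < 2`) which is hypercontractive (`T(s)` bounded from `L_p` to `L_2` for some `s > 0`)
satisfies: every `T(t)`, `t > 0`, can be approximated in operator norm, with quantitative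
control, by operators mapping `L_p` boundedly into `L_2`; in particular `T(t)` lies in the
norm closure of the set `Γ₂` of such operators. -/
theorem pisier_hypercontractive_semigroup
    {Ω : Type*} [MeasurableSpace Ω] (μ : Measure Ω) [IsProbabilityMeasure μ]
    (p : ℝ≥0∞) (hp1 : 1 < p) (hp2 : p < 2) [Fact (1 ≤ p)]
    (α : ℝ) (hα0 : 0 < α) (hαle : α ≤ Real.pi / 2)
    (T : ℂ → (Lp ℂ p μ →L[ℂ] Lp ℂ p μ))
    (hanal : AnalyticOnNhd ℂ T {z : ℂ | z ≠ 0 ∧ |z.arg| < α})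
    (hsemi : ∀ z ∈ {z : ℂ | z ≠ 0 ∧ |z.arg| < α}, ∀ w ∈ {z : ℂ | z ≠ 0 ∧ |z.arg| < α},
      T z ∘L T w = T (z + w))
    (hbdd : ∀ β R : ℝ, 0 < β → β < α → 0 < R →
      ∃ M : ℝ, ∀ z : ℂ, z ≠ 0 → |z.arg| < β → ‖z‖ ≤ R → ‖T z‖ ≤ M)
    (s : ℝ) (hs : 0 < s) (c₀ : ℝ) (hc₀ : 0 < c₀)
    (hhyp : ∀ f : Lp ℂ p μ, MemLp (⇑(T (s : ℂ) f)) 2 μ ∧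
      eLpNorm (⇑(T (s : ℂ) f)) 2 μ ≤ ENNReal.ofReal (c₀ * ‖f‖)) :
    ∀ t : ℝ, 0 < t →
      (∃ c > (0 : ℝ), ∃ d : ℝ, ∀ ε > (0 : ℝ),
        ∃ T' : Lp ℂ p μ →L[ℂ] Lp ℂ p μ,
          ‖T (t : ℂ) - T'‖ ≤ ε ∧
          ∀ f : Lp ℂ p μ, MemLp (⇑(T' f)) 2 μ ∧
            eLpNorm (⇑(T' f)) 2 μ ≤ ENNReal.ofReal (c * ε ^ d * ‖f‖)) ∧
      T (t : ℂ) ∈ closure {S : Lp ℂ p μ →L[ℂ] Lp ℂ p μ |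
        ∃ C : ℝ, ∀ f : Lp ℂ p μ, MemLp (⇑(S f)) 2 μ ∧
          eLpNorm (⇑(S f)) 2 μ ≤ ENNReal.ofReal (C * ‖f‖)} := by
  classical
  have hπ := Real.pi_pos
  set Sec : Set ℂ := {z : ℂ | z ≠ 0 ∧ |z.arg| < α} with hSecdef
  set θ : ℝ := α / 2 with hθdef
  have hθ0 : 0 < θ := by rw [hθdef]; linarith
  have hθπ : θ ≤ Real.pi / 2 := by rw [hθdef]; linarith
  have hθα : θ < α := by rw [hθdef]; linarith
  set σ : ℝ := Real.sin θ with hσdef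
  have hσ0 : 0 < σ := Real.sin_pos_of_pos_of_lt_pi hθ0 (by linarith)
  have hσ1 : σ ≤ 1 := Real.sin_le_one θ
  set k : ℝ := σ / (1 + σ) with hkdef
  have hk0 : 0 < k := by positivity
  have hk1 : k < 1 := by rw [hkdef, div_lt_one (by linarith)]; linarith
  -- geometry: balls inside the sector
  have hgeo : ∀ x0 : ℝ, 0 < x0 → ∀ z : ℂ, ‖z - (x0 : ℂ)‖ < k * x0 →
      z ∈ Sec ∧ z ≠ 0 ∧ |z.arg| < θ := by
    intro x0 hx0 z hz
    obtain ⟨h1, h2⟩ := PisierAux.mem_sector hθ0 hθπ hx0 hz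
    exact ⟨⟨h1, lt_trans h2 hθα⟩, h1, h2⟩
  have hreal : ∀ u : ℝ, 0 < u → (u : ℂ) ∈ Sec := by
    intro u hu
    refine ⟨by exact_mod_cast hu.ne', ?_⟩
    rw [Complex.arg_ofReal_of_nonneg hu.le]
    simpa using hα0
  clear_value Sec θ σ k
  -- the Γ₂-composition principle
  have hGammaComp : ∀ (A R : Lp ℂ p μ →L[ℂ] Lp ℂ p μ) (CA : ℝ), 0 ≤ CA →
      (∀ f, MemLp (⇑(A f)) 2 μ ∧ eLpNorm (⇑(A f)) 2 μ ≤ ENNReal.ofReal (CA * ‖f‖)) →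
      ∀ f, MemLp (⇑((A ∘L R) f)) 2 μ ∧
        eLpNorm (⇑((A ∘L R) f)) 2 μ ≤ ENNReal.ofReal (CA * ‖R‖ * ‖f‖) := by
    intro A R CA hCA hA f
    have h1 := hA (R f)
    refine ⟨h1.1, le_trans h1.2 (ENNReal.ofReal_le_ofReal ?_)⟩
    calc CA * ‖R f‖ ≤ CA * (‖R‖ * ‖f‖) :=
          mul_le_mul_of_nonneg_left (R.le_opNorm f) hCA
      _ = CA * ‖R‖ * ‖f‖ := by ring
  -- the approximation property
  set H : ℝ → Prop := fun u => ∃ c : ℝ, 0 < c ∧ ∃ d : ℝ, d ≤ 0 ∧ ∀ ε > (0:ℝ),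
    ∃ T' : Lp ℂ p μ →L[ℂ] Lp ℂ p μ, ‖T (u : ℂ) - T'‖ ≤ ε ∧
      ∀ f, MemLp (⇑(T' f)) 2 μ ∧
        eLpNorm (⇑(T' f)) 2 μ ≤ ENNReal.ofReal (c * ε ^ d * ‖f‖) with hHdef
  have hbase : H s := by
    refine ⟨c₀, hc₀, 0, le_refl _, fun ε hε => ⟨T (s:ℂ), by simp [hε.le], fun f => ?_⟩⟩
    have := hhyp f
    simpa [Real.rpow_zero] using this
  -- the key analytic step
  have hkey : ∀ u₀ : ℝ, 0 < u₀ → H u₀ → ∀ t : ℝ, (1 - k) * u₀ < t → H t := by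
    intro u₀ hu₀ hHu t ht
    obtain ⟨c, hc, d, hd, hA⟩ := hHu
    have h1k : 0 < 1 - k := by linarith only [hk1]
    have htpos : 0 < t := lt_of_le_of_lt (mul_pos h1k hu₀).le ht
    set t0 : ℝ := (max t u₀ + t / (1 - k)) / 2 with ht0def
    clear_value t0
    have hmax : max t u₀ < t / (1 - k) := by
      rw [max_lt_iff]
      constructor
      · rw [lt_div_iff₀ h1k]; linarith only [mul_pos htpos hk0]
      · rw [lt_div_iff₀ h1k]; linarith only [ht]
    have hmaxlt : max t u₀ < t0 := by rw [ht0def]; linarith only [hmax]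
    have htt0 : t < t0 := lt_of_le_of_lt (le_max_left t u₀) hmaxlt
    have ht0u : u₀ < t0 := lt_of_le_of_lt (le_max_right t u₀) hmaxlt
    have ht0lt : t0 < t / (1 - k) := by rw [ht0def]; linarith only [hmax]
    have ht0pos : 0 < t0 := htpos.trans htt0
    have hkt0 : t0 - t < k * t0 := by
      have h := (lt_div_iff₀ h1k).1 ht0lt
      linarith only [h]
    set y₀ : ℝ := t0 - t with hy₀def
    clear_value y₀
    have hy₀pos : 0 < y₀ := by rw [hy₀def]; linarith only [htt0]
    set rb : ℝ := (y₀ + k * t0) / 2 with hrbdef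
    clear_value rb
    have hrb1 : y₀ < rb := by rw [hrbdef]; linarith only [hkt0]
    have hrb2 : rb < k * t0 := by rw [hrbdef]; linarith only [hkt0]
    have hrbpos : 0 < rb := hy₀pos.trans hrb1
    set rp : ℝ := (y₀ + rb) / 2 with hrpdef
    clear_value rp
    have hrp1 : y₀ < rp := by rw [hrpdef]; linarith only [hrb1]
    have hrp2 : rp < rb := by rw [hrpdef]; linarith only [hrb1]
    have hrppos : 0 < rp := hy₀pos.trans hrp1
    set x₁ : ℝ := t0 - u₀ with hx₁def
    clear_value x₁
    have hx₁ : 0 < x₁ := by rw [hx₁def]; linarith only [ht0u]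
    set rs : ℝ := k * x₁ / 2 with hrsdef
    clear_value rs
    have hrspos : 0 < rs := by rw [hrsdef]; positivity
    have hrs2 : rs < k * x₁ := by rw [hrsdef]; linarith only [mul_pos hk0 hx₁]
    have hrsrb : rs ≤ rb := by
      rw [hrsdef, hrbdef, hx₁def]
      have h := mul_le_mul_of_nonneg_left (sub_le_self t0 hu₀.le) hk0.le
      linarith only [h, hy₀pos]
    -- sector inclusions
    have hsub_big : ∀ z : ℂ, z ∈ Metric.closedBall (t0:ℂ) rb → z ∈ Sec := by
      intro z hz
      exact (hgeo t0 ht0pos z (lt_of_le_of_lt (mem_closedBall_iff_norm.1 hz) hrb2)).1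
    have hshift : ∀ z : ℂ, z ∈ Metric.closedBall (t0:ℂ) rs →
        (z - (u₀:ℂ)) ∈ Sec ∧ (z - (u₀:ℂ)) ≠ 0 ∧ |(z - (u₀:ℂ)).arg| < θ := by
      intro z hz
      have hzz : ‖(z - (u₀:ℂ)) - ((x₁:ℝ):ℂ)‖ < k * x₁ := by
        have heq : (z - (u₀:ℂ)) - ((x₁:ℝ):ℂ) = z - (t0:ℂ) := by
          rw [hx₁def]; push_cast; ring
        rw [heq]
        exact lt_of_le_of_lt (mem_closedBall_iff_norm.1 hz) hrs2
      exact hgeo x₁ hx₁ _ hzz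
    -- uniform bound on the shifted semigroup
    obtain ⟨M, hM⟩ := hbdd θ (x₁ + rs) hθ0 hθα (by positivity)
    set M₁ : ℝ := max M 1 with hM₁def
    have hM₁ : 0 < M₁ := lt_of_lt_of_le one_pos (le_max_right M 1)
    have hGb : ∀ z ∈ Metric.closedBall (t0:ℂ) rs, ‖T (z - (u₀:ℂ))‖ ≤ M₁ := by
      intro z hz
      obtain ⟨hmem, hne, harg⟩ := hshift z hz
      have h1 : z - (u₀:ℂ) = (z - (t0:ℂ)) + ((x₁:ℝ):ℂ) := by
        rw [hx₁def]; push_cast; ring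
      have habs : ‖z - (u₀:ℂ)‖ ≤ x₁ + rs := by
        have h3 : ‖((x₁:ℝ):ℂ)‖ = x₁ := by
          rw [Complex.norm_real, Real.norm_eq_abs, abs_of_pos hx₁]
        have h2 := mem_closedBall_iff_norm.1 hz
        calc ‖z - (u₀:ℂ)‖ = ‖(z - (t0:ℂ)) + ((x₁:ℝ):ℂ)‖ := by
              rw [h1]
          _ ≤ ‖z - (t0:ℂ)‖ + ‖((x₁:ℝ):ℂ)‖ := norm_add_le _ _
          _ ≤ x₁ + rs := by rw [h3]; linarith only [h2]
      exact le_trans (hM _ hne harg habs) (le_max_left M 1)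
    clear_value M₁
    -- power series of T on the big ball
    set Rb : NNReal := ⟨rb, hrbpos.le⟩ with hRbdef
    set Rp : NNReal := ⟨rp, hrppos.le⟩ with hRpdef
    set Rs : NNReal := ⟨rs, hrspos.le⟩ with hRsdef
    have hTdb : DifferentiableOn ℂ T (Metric.closedBall (t0:ℂ) (Rb:ℝ)) := by
      intro z hz
      exact ((hanal z (hsub_big z hz)).differentiableAt).differentiableWithinAt
    have hP : HasFPowerSeriesOnBall T (cauchyPowerSeries T (t0:ℂ) (Rb:ℝ)) (t0:ℂ) Rb :=
      hTdb.hasFPowerSeriesOnBall (by exact_mod_cast hrbpos)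
    set P := cauchyPowerSeries T (t0:ℂ) (Rb:ℝ) with hPdef
    obtain ⟨a, ha, C, hC, happrox⟩ := hP.uniform_geometric_approx
      (r' := Rp) (by exact_mod_cast hrp2)
    -- power series of the shifted semigroup on the small ball
    set G : ℂ → (Lp ℂ p μ →L[ℂ] Lp ℂ p μ) := fun z => T (z - (u₀:ℂ)) with hGdef
    have hGd : DifferentiableOn ℂ G (Metric.closedBall (t0:ℂ) (Rs:ℝ)) := by
      intro z hz
      have h1 : DifferentiableAt ℂ T (z - (u₀:ℂ)) :=
        (hanal _ (hshift z hz).1).differentiableAt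
      have h2 : DifferentiableAt ℂ (fun w : ℂ => w - (u₀:ℂ)) z :=
        (differentiable_id.sub_const _) z
      exact (h1.comp z h2).differentiableWithinAt
    have hQ : HasFPowerSeriesOnBall G (cauchyPowerSeries G (t0:ℂ) (Rs:ℝ)) (t0:ℂ) Rs :=
      hGd.hasFPowerSeriesOnBall (by exact_mod_cast hrspos)
    set Q := cauchyPowerSeries G (t0:ℂ) (Rs:ℝ) with hQdef
    have hQb : ∀ n, ‖Q n‖ ≤ M₁ / rs ^ n := by
      intro n
      exact PisierAux.cauchy_coeff_norm_le G (t0:ℂ) hrspos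
        (fun z hz => hGb z (Metric.sphere_subset_closedBall hz)) n
    -- fixed constants
    set b : ℝ := y₀ / rs with hbdef
    clear_value b
    have hb0 : 0 ≤ b := by rw [hbdef]; positivity
    set B : ℝ := max 2 b with hBdef
    have hB2 : (2:ℝ) ≤ B := le_max_left 2 b
    have hBb : b ≤ B := le_max_right 2 b
    clear_value B
    have hB1 : (1:ℝ) < B := by linarith only [hB2]
    have hBpos : (0:ℝ) < B := by linarith only [hB2]
    have hloga : Real.log a < 0 := Real.log_neg ha.1 ha.2
    have hlogB : 0 < Real.log B := Real.log_pos hB1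
    set κ : ℝ := 2 * Real.log B / Real.log a with hκdef
    clear_value κ
    have hκ : κ < 0 := by
      rw [hκdef]
      exact div_neg_of_pos_of_neg (by linarith only [hlogB]) hloga
    set dF : ℝ := d + κ * (1 - d) with hdFdef
    clear_value dF
    have hdF : dF ≤ 0 := by
      have h1 : κ * (1 - d) ≤ 0 :=
        mul_nonpos_iff.2 (Or.inr ⟨hκ.le, by linarith only [hd]⟩)
      rw [hdFdef]
      linarith only [hd, h1]
    set cF : ℝ := c * M₁ * (2*M₁) ^ (-d) * (B*B) ^ (1-d) * (2*C) ^ (-(κ*(1-d))) with hcFdef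
    clear_value cF
    have hcF : 0 < cF := by
      have h1 : (0:ℝ) < (2*M₁) ^ (-d) := Real.rpow_pos_of_pos (by linarith only [hM₁]) _
      have h2 : (0:ℝ) < (B*B) ^ (1-d) := Real.rpow_pos_of_pos (mul_pos hBpos hBpos) _
      have h3 : (0:ℝ) < (2*C) ^ (-(κ*(1-d))) := Real.rpow_pos_of_pos (by linarith only [hC]) _
      rw [hcFdef]
      exact mul_pos (mul_pos (mul_pos (mul_pos hc hM₁) h1) h2) h3
    refine ⟨cF, hcF, dF, hdF, ?_⟩
    intro ε hε
    -- choice of N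
    have hNex : ∃ n : ℕ, C * a ^ n ≤ ε / 2 := by
      obtain ⟨n, hn⟩ := exists_pow_lt_of_lt_one
        (show (0:ℝ) < ε/(2*C) by
          apply div_pos hε
          linarith only [hC]) ha.2
      refine ⟨n, ?_⟩
      have h1 := (mul_lt_mul_iff_right₀ hC).2 hn
      have h2 : C * (ε/(2*C)) = ε/2 := by
        field_simp
      rw [h2] at h1
      exact h1.le
    set N := Nat.find hNex with hNdef
    have hNspec : C * a ^ N ≤ ε / 2 := Nat.find_spec hNex
    set X : ℝ := B ^ (2*N) with hXdef
    clear_value X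
    have hXpos : 0 < X := by rw [hXdef]; exact pow_pos hBpos _
    have hX1 : (1:ℝ) ≤ X := by rw [hXdef]; exact one_le_pow₀ (by linarith only [hB2])
    set ε' : ℝ := ε / (2 * M₁ * X) with hε'def
    clear_value ε'
    have hε'pos : 0 < ε' := by
      rw [hε'def]
      exact div_pos hε (by have := mul_pos (mul_pos two_pos hM₁) hXpos; linarith only [this])
    obtain ⟨A, hAn, hAΓ⟩ := hA ε' hε'pos
    set y : ℂ := (t:ℂ) - (t0:ℂ) with hydef
    have hynorm : ‖y‖ = y₀ := by
      have heq : y = ((t - t0 : ℝ) : ℂ) := by rw [hydef]; push_cast; ring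
      rw [heq, Complex.norm_real, Real.norm_eq_abs, abs_of_neg (by linarith only [htt0]), hy₀def]
      ring
    set SN := Q.partialSum N y with hSNdef
    set L : (Lp ℂ p μ →L[ℂ] Lp ℂ p μ) →L[ℂ] (Lp ℂ p μ →L[ℂ] Lp ℂ p μ) :=
      ContinuousLinearMap.compL ℂ (Lp ℂ p μ) (Lp ℂ p μ) (Lp ℂ p μ) A with hLdef
    have hLapp : ∀ X : Lp ℂ p μ →L[ℂ] Lp ℂ p μ, L X = A ∘L X := fun _ => rfl
    -- difference of power series
    have hPs : HasFPowerSeriesOnBall T P (t0:ℂ) Rs :=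
      hP.mono (by exact_mod_cast hrspos) (by exact_mod_cast hrsrb)
    have hLG : HasFPowerSeriesOnBall (⇑L ∘ G) (L.compFormalMultilinearSeries Q) (t0:ℂ) Rs :=
      L.comp_hasFPowerSeriesOnBall hQ
    have hDps : HasFPowerSeriesOnBall (T - ⇑L ∘ G)
        (P - L.compFormalMultilinearSeries Q) (t0:ℂ) Rs := hPs.sub hLG
    have hDd : DifferentiableOn ℂ (fun z => T z - L (G z))
        (Metric.closedBall (t0:ℂ) (Rs:ℝ)) := by
      refine DifferentiableOn.sub ?_ (L.differentiable.comp_differentiableOn hGd)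
      exact hTdb.mono (Metric.closedBall_subset_closedBall (by exact_mod_cast hrsrb))
    have hDps2 : HasFPowerSeriesOnBall (fun z => T z - L (G z))
        (cauchyPowerSeries (fun z => T z - L (G z)) (t0:ℂ) (Rs:ℝ)) (t0:ℂ) Rs :=
      hDd.hasFPowerSeriesOnBall (by exact_mod_cast hrspos)
    have hfun : (T - ⇑L ∘ G) = fun z => T z - L (G z) := rfl
    have huniq : P - L.compFormalMultilinearSeries Q =
        cauchyPowerSeries (fun z => T z - L (G z)) (t0:ℂ) (Rs:ℝ) :=
      HasFPowerSeriesAt.eq_formalMultilinearSeries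
        (hfun ▸ hDps).hasFPowerSeriesAt hDps2.hasFPowerSeriesAt
    have hDb : ∀ z ∈ Metric.sphere (t0:ℂ) rs, ‖T z - L (G z)‖ ≤ ε' * M₁ := by
      intro z hz
      have hzcb : z ∈ Metric.closedBall (t0:ℂ) rs := Metric.sphere_subset_closedBall hz
      have hsem := hsemi (u₀:ℂ) (hreal u₀ hu₀) (z - (u₀:ℂ)) (hshift z hzcb).1
      have hzz : (u₀:ℂ) + (z - (u₀:ℂ)) = z := by ring
      rw [hzz] at hsem
      have heq : T z - L (G z) = (T (u₀:ℂ) - A) ∘L (T (z - (u₀:ℂ))) := by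
        rw [← hsem, ContinuousLinearMap.sub_comp]
        rfl
      rw [heq]
      calc ‖(T (u₀:ℂ) - A) ∘L (T (z - (u₀:ℂ)))‖
          ≤ ‖T (u₀:ℂ) - A‖ * ‖T (z - (u₀:ℂ))‖ := ContinuousLinearMap.opNorm_comp_le _ _
        _ ≤ ε' * M₁ := mul_le_mul hAn (hGb z hzcb) (norm_nonneg _) hε'pos.le
    have hcoeffD : ∀ n, ‖(P - L.compFormalMultilinearSeries Q) n‖ ≤ ε' * M₁ / rs ^ n := by
      intro n
      rw [huniq]
      exact PisierAux.cauchy_coeff_norm_le _ _ hrspos hDb n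
    -- partial sum manipulations
    have hsum : P.partialSum N y - L SN =
        ∑ j ∈ Finset.range N, ((P - L.compFormalMultilinearSeries Q) j) (fun _ => y) := by
      rw [hSNdef]
      unfold FormalMultilinearSeries.partialSum
      rw [map_sum, ← Finset.sum_sub_distrib]
      rfl
    have hNX : (N:ℝ) * B ^ N ≤ X := by
      have h1 : (N:ℝ) ≤ B ^ N := by
        calc (N:ℝ) ≤ 2 ^ N := by exact_mod_cast (Nat.lt_two_pow_self (n := N)).le
          _ ≤ B ^ N := by
              apply pow_le_pow_left₀ (by norm_num) hB2
      calc (N:ℝ) * B ^ N ≤ B ^ N * B ^ N :=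
            mul_le_mul_of_nonneg_right h1 (pow_nonneg hBpos.le N)
        _ = X := by rw [hXdef, two_mul, pow_add]
    have hterm : ∀ j, j < N →
        ‖((P - L.compFormalMultilinearSeries Q) j) (fun _ : Fin j => y)‖ ≤ ε' * M₁ * B ^ N := by
      intro j hj
      have hyj : (0:ℝ) ≤ y₀ ^ j := by positivity
      calc ‖((P - L.compFormalMultilinearSeries Q) j) (fun _ : Fin j => y)‖
          ≤ ‖(P - L.compFormalMultilinearSeries Q) j‖ * ∏ _i : Fin j, ‖y‖ :=
            ContinuousMultilinearMap.le_opNorm _ _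
        _ = ‖(P - L.compFormalMultilinearSeries Q) j‖ * y₀ ^ j := by
            rw [hynorm]; simp
        _ ≤ (ε' * M₁ / rs ^ j) * y₀ ^ j := by
            exact mul_le_mul_of_nonneg_right (hcoeffD j) hyj
        _ = ε' * M₁ * b ^ j := by
            rw [hbdef, div_pow]
            ring
        _ ≤ ε' * M₁ * B ^ N := by
            have h1 : b ^ j ≤ B ^ j := pow_le_pow_left₀ hb0 hBb j
            have h2 : B ^ j ≤ B ^ N := pow_le_pow_right₀ (by linarith only [hB2]) hj.le
            exact mul_le_mul_of_nonneg_left (h1.trans h2) (mul_pos hε'pos hM₁).le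
    have hsumb : ‖P.partialSum N y - L SN‖ ≤ ε / 2 := by
      rw [hsum]
      have hXne : X ≠ 0 := hXpos.ne'
      have hM₁ne : M₁ ≠ 0 := hM₁.ne'
      calc ‖∑ j ∈ Finset.range N, ((P - L.compFormalMultilinearSeries Q) j) (fun _ => y)‖
          ≤ ∑ j ∈ Finset.range N, ‖((P - L.compFormalMultilinearSeries Q) j) (fun _ => y)‖ :=
            norm_sum_le _ _
        _ ≤ ∑ _j ∈ Finset.range N, ε' * M₁ * B ^ N :=
            Finset.sum_le_sum (fun j hj => hterm j (Finset.mem_range.1 hj))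
        _ = (N:ℝ) * (ε' * M₁ * B ^ N) := by
            rw [Finset.sum_const, Finset.card_range, nsmul_eq_mul]
        _ = ε' * M₁ * ((N:ℝ) * B ^ N) := by ring
        _ ≤ ε' * M₁ * X := mul_le_mul_of_nonneg_left hNX (mul_pos hε'pos hM₁).le
        _ = ε / 2 := by
            rw [hε'def]
            field_simp
    have hSNb : ‖SN‖ ≤ M₁ * X := by
      rw [hSNdef]
      unfold FormalMultilinearSeries.partialSum
      calc ‖∑ j ∈ Finset.range N, Q j (fun _ => y)‖
          ≤ ∑ j ∈ Finset.range N, ‖Q j (fun _ => y)‖ := norm_sum_le _ _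
        _ ≤ ∑ _j ∈ Finset.range N, M₁ * B ^ N := by
            refine Finset.sum_le_sum (fun j hj => ?_)
            have hj := Finset.mem_range.1 hj
            have hyj : (0:ℝ) ≤ y₀ ^ j := by positivity
            calc ‖Q j (fun _ => y)‖ ≤ ‖Q j‖ * ∏ _i : Fin j, ‖y‖ :=
                  ContinuousMultilinearMap.le_opNorm _ _
              _ = ‖Q j‖ * y₀ ^ j := by rw [hynorm]; simp
              _ ≤ (M₁ / rs ^ j) * y₀ ^ j := mul_le_mul_of_nonneg_right (hQb j) hyj
              _ = M₁ * b ^ j := by rw [hbdef, div_pow]; ring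
              _ ≤ M₁ * B ^ N := by
                  have h1 : b ^ j ≤ B ^ j := pow_le_pow_left₀ hb0 hBb j
                  have h2 : B ^ j ≤ B ^ N := pow_le_pow_right₀ (by linarith only [hB2]) hj.le
                  exact mul_le_mul_of_nonneg_left (h1.trans h2) hM₁.le
        _ = (N:ℝ) * (M₁ * B ^ N) := by
            rw [Finset.sum_const, Finset.card_range, nsmul_eq_mul]
        _ = M₁ * ((N:ℝ) * B ^ N) := by ring
        _ ≤ M₁ * X := mul_le_mul_of_nonneg_left hNX hM₁.le
    -- error estimate
    have hTt : ((t0:ℂ) + y) = (t:ℂ) := by rw [hydef]; ring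
    have happ1 : ‖T ((t0:ℂ) + y) - P.partialSum N y‖ ≤ C * a ^ N := by
      refine happrox y ?_ N
      rw [mem_ball_zero_iff, hynorm]
      exact_mod_cast hrp1
    have herr : ‖T (t:ℂ) - (A ∘L SN)‖ ≤ ε := by
      have h0 : T (t:ℂ) - (A ∘L SN) =
          (T (t:ℂ) - P.partialSum N y) + (P.partialSum N y - L SN) := by
        rw [hLapp]; abel
      calc ‖T (t:ℂ) - (A ∘L SN)‖
          ≤ ‖T (t:ℂ) - P.partialSum N y‖ + ‖P.partialSum N y - L SN‖ := by
            rw [h0]; exact norm_add_le _ _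
        _ ≤ C * a ^ N + ε / 2 := by
            refine add_le_add ?_ hsumb
            rw [← hTt]; exact happ1
        _ ≤ ε := by linarith only [hNspec]
    -- the hypercontractivity estimate
    have hc' : 0 ≤ c * ε' ^ d := (mul_pos hc (Real.rpow_pos_of_pos hε'pos d)).le
    have hΓ := hGammaComp A SN (c * ε' ^ d) hc' hAΓ
    have hconst : c * ε' ^ d * ‖SN‖ ≤ cF * ε ^ dF := by
      have hrfin : 0 < cF * ε ^ dF := mul_pos hcF (Real.rpow_pos_of_pos hε dF)
      rcases Nat.eq_zero_or_pos N with hN0 | hN1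
      · have hSN0 : SN = 0 := by
          rw [hSNdef, hN0]
          simp [FormalMultilinearSeries.partialSum]
        rw [hSN0, norm_zero, mul_zero]
        exact hrfin.le
      · have hfind := Nat.find_min hNex (show N - 1 < N by omega)
        push_neg at hfind
        have hstep1 : ε / (2*C) < a ^ (N-1) := by
          rw [div_lt_iff₀ (by linarith only [hC] : (0:ℝ) < 2*C)]
          linarith only [hfind]
        have hX2 : X ≤ (B*B) * (ε/(2*C)) ^ κ := by
          have hpow : X = (B*B) * B ^ (2*(N-1)) := by
            rw [hXdef]
            have h2N : 2*N = 2 + 2*(N-1) := by omega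
            rw [h2N, pow_add, sq]
          have hBeq : (B:ℝ) ^ (2*(N-1)) = (a ^ (N-1) : ℝ) ^ κ := by
            rw [← Real.rpow_natCast B (2*(N-1)), ← Real.rpow_natCast a (N-1),
              ← Real.rpow_mul ha.1.le]
            rw [Real.rpow_def_of_pos hBpos, Real.rpow_def_of_pos ha.1]
            congr 1
            have hlogane : Real.log a ≠ 0 := hloga.ne
            rw [hκdef]
            push_cast [Nat.cast_sub hN1]
            field_simp
          have hmono : (a ^ (N-1) : ℝ) ^ κ ≤ (ε/(2*C)) ^ κ :=
            Real.rpow_le_rpow_of_nonpos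
              (div_pos hε (by linarith only [hC])) hstep1.le hκ.le
          rw [hpow, hBeq]
          exact mul_le_mul_of_nonneg_left hmono (mul_pos hBpos hBpos).le
        have hεd : ε' ^ d = ε ^ d * (2*M₁) ^ (-d) * X ^ (-d) := by
          rw [hε'def, Real.div_rpow hε.le
              (by have := mul_pos (mul_pos two_pos hM₁) hXpos; linarith only [this]),
            Real.mul_rpow (by linarith only [hM₁] : (0:ℝ) ≤ 2*M₁) hXpos.le,
            Real.rpow_neg (by linarith only [hM₁] : (0:ℝ) ≤ 2*M₁), Real.rpow_neg hXpos.le]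
          rw [div_eq_mul_inv, mul_inv]
          ring
        have hXX : X ^ (-d) * X = X ^ (1-d) := by
          nth_rewrite 2 [← Real.rpow_one X]
          rw [← Real.rpow_add hXpos]
          ring_nf
        calc c * ε' ^ d * ‖SN‖
            ≤ c * ε' ^ d * (M₁ * X) :=
              mul_le_mul_of_nonneg_left hSNb
                (mul_pos hc (Real.rpow_pos_of_pos hε'pos d)).le
          _ = c * M₁ * (2*M₁) ^ (-d) * (ε ^ d * (X ^ (-d) * X)) := by rw [hεd]; ring
          _ = c * M₁ * (2*M₁) ^ (-d) * (ε ^ d * X ^ (1-d)) := by rw [hXX]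
          _ ≤ c * M₁ * (2*M₁) ^ (-d) * (ε ^ d * ((B*B) * (ε/(2*C)) ^ κ) ^ (1-d)) := by
              have h1 : X ^ (1-d) ≤ ((B*B) * (ε/(2*C)) ^ κ) ^ (1-d) :=
                Real.rpow_le_rpow hXpos.le hX2 (by linarith only [hd])
              have h2 : 0 < (2*M₁:ℝ) ^ (-d) := Real.rpow_pos_of_pos (by linarith only [hM₁]) _
              have h4 := mul_le_mul_of_nonneg_left h1 (Real.rpow_pos_of_pos hε d).le
              exact mul_le_mul_of_nonneg_left h4
                (mul_pos (mul_pos hc hM₁) h2).le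
          _ = cF * ε ^ dF := by
              rw [hcFdef, hdFdef]
              have hεC : (0:ℝ) < ε/(2*C) := div_pos hε (by linarith only [hC])
              rw [Real.mul_rpow (mul_pos hBpos hBpos).le
                (Real.rpow_pos_of_pos hεC κ).le]
              rw [← Real.rpow_mul hεC.le]
              rw [Real.div_rpow hε.le (by linarith only [hC] : (0:ℝ) ≤ 2*C)]
              rw [Real.rpow_add hε d (κ*(1-d))]
              rw [Real.rpow_neg (by positivity : (0:ℝ) ≤ 2*C)]
              ring
    refine ⟨A ∘L SN, herr, fun f => ?_⟩
    obtain ⟨hmem, hle⟩ := hΓ f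
    refine ⟨hmem, le_trans hle (ENNReal.ofReal_le_ofReal ?_)⟩
    exact mul_le_mul_of_nonneg_right hconst (norm_nonneg f)
  -- iterate the key step
  have hseq : ∀ n : ℕ, H ((1 - k/2)^n * s) := by
    intro n
    induction n with
    | zero => simpa using hbase
    | succ n ih =>
      have hpos : 0 < (1 - k/2)^n * s := by
        have : 0 < 1 - k/2 := by linarith
        positivity
      refine hkey _ hpos ih _ ?_
      have h1 : (1 - k/2)^(n+1) * s = (1 - k/2) * ((1 - k/2)^n * s) := by ring
      rw [h1]
      linarith only [mul_pos hk0 hpos]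
  -- conclude
  intro t ht
  have hHt : H t := by
    obtain ⟨n, hn⟩ := exists_pow_lt_of_lt_one (show (0:ℝ) < t/s by positivity)
      (show 1 - k/2 < 1 by linarith)
    have hns : (1 - k/2)^n * s < t := by
      rw [← lt_div_iff₀ hs]
      exact hn
    have hpos : 0 < (1 - k/2)^n * s := by
      have : 0 < 1 - k/2 := by linarith
      positivity
    refine hkey _ hpos (hseq n) t ?_
    calc (1 - k) * ((1 - k/2)^n * s) ≤ 1 * ((1 - k/2)^n * s) :=
          mul_le_mul_of_nonneg_right (by linarith only [hk0]) hpos.le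
      _ < t := by rw [one_mul]; exact hns
  obtain ⟨c, hc, d, _, hspec⟩ := hHt
  constructor
  · exact ⟨c, hc, d, fun ε hε => hspec ε hε⟩
  · rw [Metric.mem_closure_iff]
    intro ε hε
    obtain ⟨T', h1, h2⟩ := hspec (ε/2) (by linarith)
    refine ⟨T', ⟨c * (ε/2)^d, h2⟩, ?_⟩
    rw [dist_eq_norm]
    linarith
end

section
/- Let L be a Banach space and let (T(z)) be a holomorphic semigroup in B(L): z ↦ T(z) is analytic from an open sector S_α = {z ∈ ℂ : z ≠ 0, |arg z| < α} (for some 0 < α ≤ π/2) into B(L) and T(z)T(w) = T(z+w) for all z, w ∈ S_α. Let I ⊆ B(L) be a norm-closed linear subspace that is a left ideal, i.e. x∘T ∈ I for every x ∈ B(L) and T ∈ I. If T(s) ∈ I for some s > 0, then T(t) ∈ I for every t > 0. -/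
open Complex

/-- Arendt's remark (Remark 1): if `T(z)` is a holomorphic semigroup on a Banach space `L`
(analytic on an open sector and satisfying the semigroup law there) and `I` is a norm-closed
left ideal of `B(L)` containing `T(s)` for some `s > 0`, then `T(t) ∈ I` for all `t > 0`. -/
theorem pisier_semigroup_closed_left_ideal
    {L : Type*} [NormedAddCommGroup L] [NormedSpace ℂ L]
    (α : ℝ) (hα0 : 0 < α) (hαle : α ≤ Real.pi / 2)
    (T : ℂ → (L →L[ℂ] L))
    (hanal : AnalyticOnNhd ℂ T {z : ℂ | z ≠ 0 ∧ |z.arg| < α})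
    (hsemi : ∀ z ∈ {z : ℂ | z ≠ 0 ∧ |z.arg| < α}, ∀ w ∈ {z : ℂ | z ≠ 0 ∧ |z.arg| < α},
      T z ∘L T w = T (z + w))
    (I : Submodule ℂ (L →L[ℂ] L)) (hIclosed : IsClosed (I : Set (L →L[ℂ] L)))
    (hIdeal : ∀ (x : L →L[ℂ] L), ∀ S ∈ I, x ∘L S ∈ I)
    (s : ℝ) (hs : 0 < s) (hTs : T (s : ℂ) ∈ I) :
    ∀ t : ℝ, 0 < t → T (t : ℂ) ∈ I := by
  intro t ht
  by_contra hTt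
  -- separate `T t` from `I` by a continuous linear functional
  obtain ⟨f, c, hfI, hfx⟩ :=
    RCLike.geometric_hahn_banach_closed_point (𝕜 := ℂ) ((I.restrictScalars ℝ).convex) hIclosed hTt
  have hc0 : (0 : ℝ) < c := by simpa using hfI 0 I.zero_mem
  -- the functional vanishes on `I`
  have hf0 : ∀ a ∈ I, f a = 0 := by
    intro a ha
    by_contra hfa
    have key : ∀ r : ℝ, r < c := by
      intro r
      have h := hfI (((r : ℂ) / f a) • a) (I.smul_mem _ ha)
      rw [map_smul, smul_eq_mul, div_mul_cancel₀ _ hfa] at h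
      simpa using h
    linarith [key (c + 1)]
  -- the open convex subsector
  set V : Set ℂ := {z : ℂ | 0 < z.re ∧ -(z.re * Real.sin α) < z.im * Real.cos α ∧
      z.im * Real.cos α < z.re * Real.sin α} with hV
  have hsin : 0 < Real.sin α :=
    Real.sin_pos_of_pos_of_lt_pi hα0 (lt_of_le_of_lt hαle (by linarith [Real.pi_pos]))
  -- V is contained in the sector
  have hVsub : ∀ z ∈ V, z ∈ {z : ℂ | z ≠ 0 ∧ |z.arg| < α} := by
    rintro z ⟨h1, h2, h3⟩
    have hz0 : z ≠ 0 := fun h => by simp [h] at h1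
    refine ⟨hz0, ?_⟩
    have hhalf : |z.arg| < Real.pi / 2 :=
      Complex.abs_arg_lt_pi_div_two_iff.mpr (Or.inl h1)
    rcases lt_or_ge α (Real.pi / 2) with hα | hα
    · have hcos : 0 < Real.cos α := Real.cos_pos_of_mem_Ioo ⟨by linarith [Real.pi_pos], hα⟩
      have him : |z.im| * Real.cos α < z.re * Real.sin α := by
        rcases abs_cases z.im with ⟨he, _⟩ | ⟨he, _⟩ <;> rw [he]
        · exact h3
        · rw [neg_mul]; linarith
      by_contra hcon
      push_neg at hcon
      have htan1 : Real.tan |z.arg| = |z.im| / z.re := by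
        have habs : |Real.tan z.arg| = |z.im| / z.re := by
          rw [Complex.tan_arg, abs_div, abs_of_pos h1]
        rcases abs_cases z.arg with ⟨he, hnn⟩ | ⟨he, hneg⟩
        · rw [he, ← habs]
          exact (_root_.abs_of_nonneg (Real.tan_nonneg_of_nonneg_of_le_pi_div_two hnn
            (by rw [← he]; exact hhalf.le))).symm
        · rw [he, Real.tan_neg, ← habs, _root_.abs_of_nonpos]
          exact Real.tan_nonpos_of_nonpos_of_neg_pi_div_two_le (by linarith)
            (by rcases abs_lt.mp hhalf with ⟨hl, _⟩; linarith)
      have htanlt : Real.tan |z.arg| < Real.tan α := by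
        rw [htan1, Real.tan_eq_sin_div_cos, div_lt_div_iff₀ h1 hcos]
        linarith
      have : Real.tan α ≤ Real.tan |z.arg| := by
        rcases eq_or_lt_of_le hcon with he | hlt
        · rw [he]
        · exact (Real.tan_lt_tan_of_nonneg_of_lt_pi_div_two hα0.le hhalf hlt).le
      linarith
    · exact hhalf.trans_le hα
  -- V is convex (intersection of three open half-spaces)
  have hVconv : Convex ℝ V := by
    have e1 : IsLinearMap ℝ (fun z : ℂ => z.re) := ⟨fun x y => by simp, fun c x => by
      simp [Complex.smul_re]⟩
    have e2 : IsLinearMap ℝ (fun z : ℂ => z.im * Real.cos α + z.re * Real.sin α) :=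
      ⟨fun x y => by simp [add_mul]; ring, fun c x => by
        simp [Complex.smul_re, Complex.smul_im]; ring⟩
    have e3 : IsLinearMap ℝ (fun z : ℂ => z.im * Real.cos α - z.re * Real.sin α) :=
      ⟨fun x y => by simp [add_mul]; ring, fun c x => by
        simp [Complex.smul_re, Complex.smul_im]; ring⟩
    have : V = {z : ℂ | 0 < z.re} ∩
        ({z : ℂ | 0 < z.im * Real.cos α + z.re * Real.sin α} ∩
         {z : ℂ | z.im * Real.cos α - z.re * Real.sin α < 0}) := by
      ext z
      simp only [hV, Set.mem_setOf_eq, Set.mem_inter_iff]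
      constructor
      · rintro ⟨a, b, d⟩; exact ⟨a, by linarith, by linarith⟩
      · rintro ⟨a, b, d⟩; exact ⟨a, by linarith, by linarith⟩
    rw [this]
    exact (convex_halfSpace_gt e1 0).inter
      ((convex_halfSpace_gt e2 0).inter (convex_halfSpace_lt e3 0))
  -- positive reals lie in V
  have hmem : ∀ u : ℝ, 0 < u → (u : ℂ) ∈ V := by
    intro u hu
    refine ⟨by simpa using hu, ?_, ?_⟩ <;>
      simp only [Complex.ofReal_re, Complex.ofReal_im, zero_mul] <;> nlinarith
  -- the scalar function
  set g : ℂ → ℂ := fun z => f (T z) with hg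
  have hanalV : AnalyticOnNhd ℂ g V := fun z hz =>
    (f.analyticAt (T z)).comp (hanal z (hVsub z hz))
  -- g vanishes on the reals beyond s
  have hzeros : ∀ u : ℝ, s < u → g (u : ℂ) = 0 := by
    intro u hu
    have h1 : ((u - s : ℝ) : ℂ) ∈ {z : ℂ | z ≠ 0 ∧ |z.arg| < α} := by
      constructor
      · exact_mod_cast sub_ne_zero.mpr (ne_of_gt hu)
      · rw [Complex.arg_ofReal_of_nonneg (by linarith)]
        simpa using hα0
    have h2 : ((s : ℝ) : ℂ) ∈ {z : ℂ | z ≠ 0 ∧ |z.arg| < α} := by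
      constructor
      · exact_mod_cast hs.ne'
      · rw [Complex.arg_ofReal_of_nonneg hs.le]
        simpa using hα0
    have hse := hsemi _ h1 _ h2
    have hcast : ((u - s : ℝ) : ℂ) + (s : ℂ) = (u : ℂ) := by push_cast; ring
    rw [hcast] at hse
    have : T (u : ℂ) ∈ I := by
      rw [← hse]; exact hIdeal _ _ hTs
    exact hf0 _ this
  -- g vanishes frequently near s+1
  have hz₀V : ((s + 1 : ℝ) : ℂ) ∈ V := hmem _ (by linarith)
  have hfreq : ∃ᶠ z in nhdsWithin ((s + 1 : ℝ) : ℂ) {((s + 1 : ℝ) : ℂ)}ᶜ, g z = 0 := by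
    have htend : Filter.Tendsto (fun n : ℕ => ((s + 1 + 1 / (n + 1) : ℝ) : ℂ))
        Filter.atTop (nhdsWithin ((s + 1 : ℝ) : ℂ) {((s + 1 : ℝ) : ℂ)}ᶜ) := by
      rw [tendsto_nhdsWithin_iff]
      constructor
      · have hr : Filter.Tendsto (fun n : ℕ => (s + 1 + 1 / (n + 1) : ℝ))
            Filter.atTop (nhds (s + 1)) := by
          have := tendsto_one_div_add_atTop_nhds_zero_nat (𝕜 := ℝ)
          simpa using (tendsto_const_nhds (x := s + 1)).add this
        exact (Complex.continuous_ofReal.tendsto _).comp hr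
      · refine Filter.Eventually.of_forall fun n => ?_
        simp only [Set.mem_compl_iff, Set.mem_singleton_iff]
        intro h
        have : (s + 1 + 1 / (n + 1) : ℝ) = s + 1 := by exact_mod_cast h
        have hpos : (0 : ℝ) < 1 / (n + 1 : ℝ) := by positivity
        linarith
    exact htend.frequently (Filter.Frequently.of_forall fun n =>
      hzeros _ (by
        have hpos : (0 : ℝ) < 1 / (n + 1 : ℝ) := by positivity
        linarith))
  -- identity theorem
  have hzero : Set.EqOn g 0 V :=
    hanalV.eqOn_zero_of_preconnected_of_frequently_eq_zero hVconv.isPreconnected hz₀V hfreq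
  have : g (t : ℂ) = 0 := hzero (hmem t ht)
  rw [hg] at this
  simp only at this
  rw [this] at hfx
  simp at hfx
  linarith
end
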